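/- Let {P_θ : θ ∈ 𝕋} be a family of probability measures on a measurable space 𝕏, η : 𝕏 × 𝕋 → [0,1] with x ↦ η(x,θ) measurable for each θ, π_x(θ) = P_θ({x' : η(x',θ) ≤ η(x,θ)}), and Π̄_x(A) = sup_{θ ∈ A} π_x(θ). Fix A ⊆ 𝕋 and α ∈ [0,1], and consider the test that rejects the hypothesis 'Θ ∈ A' when Π̄_X(A) ≤ α. Then for every θ ∈ A, P_θ({x : Π̄_x(A) ≤ α}) ≤ α, i.e., the Type I error probability is bounded above by α. -/

import Mathlib

open MeasureTheory
open scoped ENNReal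

/-- Type I error control: for a hypothesis `A ⊆ 𝕋`, the test rejecting when
`Π̄_X(A) = sup_{ϑ∈A} π_X(ϑ) ≤ α` has Type I error probability at most `α`
under every `θ ∈ A`. -/
theorem im_test_type_one_error {X T : Type*} [MeasurableSpace X]
    (P : T → Measure X) (hP : ∀ θ, IsProbabilityMeasure (P θ))
    (η : X → T → ℝ) (hη : ∀ x θ, η x θ ∈ Set.Icc (0 : ℝ) 1)
    (hmeas : ∀ θ, Measurable fun x => η x θ)
    (A : Set T) (α : ℝ≥0∞) (hα : α ≤ 1) :
    ∀ θ ∈ A,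
      P θ {x | (⨆ ϑ ∈ A, P ϑ {x' | η x' ϑ ≤ η x ϑ}) ≤ α} ≤ α := by
  intro θ hθ
  haveI := hP θ
  set F : ℝ → ℝ≥0∞ := fun t => P θ {x' | η x' θ ≤ t} with hFdef
  have hFmono : Monotone F := by
    intro a b hab
    exact measure_mono (fun x hx => le_trans hx hab)
  have key : P θ {x | F (η x θ) ≤ α} ≤ α := by
    rcases eq_or_lt_of_le hα with hα1 | hα1
    · subst hα1; exact prob_le_one
    by_cases hS : {t : ℝ | F t ≤ α}.Nonempty
    · set S := {t : ℝ | F t ≤ α} with hSdef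
      have hbdd : BddAbove S := by
        refine ⟨1, fun t ht => ?_⟩
        by_contra h
        push_neg at h
        have : F t = 1 := by
          have : {x' | η x' θ ≤ t} = Set.univ := by
            ext x'; simp only [Set.mem_setOf_eq, Set.mem_univ, iff_true]
            exact le_trans (hη x' θ).2 h.le
          rw [hFdef]; simp only [this]; exact measure_univ
        have : (1 : ℝ≥0∞) ≤ α := this ▸ ht
        exact absurd this (not_le.mpr hα1)
      set c := sSup S with hcdef
      have hlt : ∀ t : ℝ, t < c → t ∈ S := by
        intro t ht
        obtain ⟨s, hsS, hts⟩ := exists_lt_of_lt_csSup hS ht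
        exact le_trans (hFmono hts.le) hsS
      by_cases hc : c ∈ S
      · refine le_trans (measure_mono (fun x hx => ?_)) hc
        exact le_csSup hbdd hx
      · have hsub : {x | F (η x θ) ≤ α} ⊆ {x | η x θ < c} := by
          intro x hx
          have h1 : η x θ ≤ c := le_csSup hbdd hx
          rcases lt_or_eq_of_le h1 with h | h
          · exact h
          · exact absurd (h ▸ hx) hc
        refine le_trans (measure_mono hsub) ?_
        have hUnion : {x | η x θ < c} = ⋃ n : ℕ, {x | η x θ ≤ c - 1 / (n + 1)} := by
          ext x
          simp only [Set.mem_setOf_eq, Set.mem_iUnion]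
          constructor
          · intro h
            obtain ⟨n, hn⟩ := exists_nat_one_div_lt (sub_pos.mpr h)
            exact ⟨n, by linarith⟩
          · rintro ⟨n, hn⟩
            have : (0 : ℝ) < 1 / (n + 1) := by positivity
            linarith
        rw [hUnion]
        have hdir : Directed (· ⊆ ·) (fun n : ℕ => {x | η x θ ≤ c - 1 / (n + 1)}) := by
          apply Monotone.directed_le
          intro m n hmn x hx
          have h1 : (1 : ℝ) / (n + 1) ≤ 1 / (m + 1) := by
            apply one_div_le_one_div_of_le
            · positivity
            · exact_mod_cast add_le_add_left (Nat.cast_le.mpr hmn) 1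
          simp only [Set.mem_setOf_eq] at hx ⊢
          linarith
        rw [hdir.measure_iUnion]
        refine iSup_le fun n => ?_
        have : c - 1 / (n + 1 : ℝ) < c := by
          have : (0 : ℝ) < 1 / (n + 1) := by positivity
          linarith
        exact hlt _ this
    · have : {x | F (η x θ) ≤ α} = ∅ := by
        ext x
        simp only [Set.mem_setOf_eq, Set.mem_empty_iff_false, iff_false]
        intro h
        exact hS ⟨η x θ, h⟩
      rw [this, measure_empty]
      exact zero_le
  refine le_trans (measure_mono fun x hx => ?_) key
  exact le_trans (le_iSup₂ (f := fun ϑ (_ : ϑ ∈ A) => P ϑ {x' | η x' ϑ ≤ η x ϑ}) θ hθ) hx
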